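/- Fix k ≥ 1, let n = m = 2k−1 with indices taken modulo n, let 0 < ε < 1/k, and define sizes s_{ij} = 1 if i = j, s_{ij} = ε if j ∈ {i+1, …, i+k−1 (mod n)}, and s_{ij} = 0 otherwise, with all capacities 1 and all weights w_i = 1. Then: (a) each item participates in at most k constraints, so the instance is k-column-sparse; (b) the vector x with x_i = 1 − kε for all i is feasible for the strengthened LP, so the LP optimum is at least (1 − kε)(2k−1); and (c) every feasible 0-1 solution contains at most one item. Consequently, the integrality gap of the strengthened LP is at least (1 − kε)(2k−1), and hence at least 2k−1 as ε → 0. -/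

import Mathlib

open Finset
open scoped Classical BigOperators

/-- the integrality-gap instance for the strengthened LP.
With `n = m = 2k-1`, sizes `s i i = 1`, `s i j = ε` for
`j ∈ {i+1, …, i+k-1} (mod n)` and `0` otherwise, and `x i = 1 - kε`:
(a) the instance is `k`-column sparse; (b) `x` is feasible for the
strengthened LP and has total value `(1-kε)(2k-1)`; (c) every feasible
0-1 solution has at most one item.  Hence the integrality gap is at least
`(1-kε)(2k-1)`, which tends to `2k-1` as `ε → 0`. -/
theorem strengthened_lp_gap (k : ℕ) (hk : 1 ≤ k) (ε : ℝ) (hε : 0 < ε)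
    (hε' : ε < 1 / k)
    (n : ℕ) (hn : n = 2 * k - 1)
    (s : Fin n → Fin n → ℝ)
    (hs : ∀ i j : Fin n, s i j =
      if i = j then 1
      else if ∃ a : ℕ, 1 ≤ a ∧ a ≤ k - 1 ∧ (j : ℕ) = ((i : ℕ) + a) % n then ε
      else 0)
    (x : Fin n → ℝ) (hx : ∀ i, x i = 1 - k * ε) :
    -- (a) each item participates in at most k constraints
    (∀ i : Fin n, ((univ : Finset (Fin n)).filter (fun j => 0 < s i j)).card ≤ k) ∧
    -- (b) x is feasible for the strengthened LP ...
    (∀ j : Fin n, ∑ i, s i j * x i ≤ 1 ∧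
      ∑ i ∈ univ.filter (fun i => 1/2 < s i j), x i ≤ 1) ∧
    -- ... and its total value is (1-kε)(2k-1)
    (∑ i, x i = (1 - k * ε) * (2 * k - 1)) ∧
    -- (c) every feasible integral solution has at most one item
    (∀ S' : Finset (Fin n), (∀ j : Fin n, ∑ i ∈ S', s i j ≤ 1) → S'.card ≤ 1) := by
  have hn0 : 0 < n := by omega
  have hk0 : (0:ℝ) < k := by exact_mod_cast hk
  have hk1 : (1:ℝ) ≤ k := by exact_mod_cast hk
  have hkε : (k:ℝ) * ε < 1 := by
    have := (lt_div_iff₀ hk0).mp hε'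
    linarith
  have hs0 : ∀ i j, 0 ≤ s i j := by
    intro i j
    rw [hs]
    split_ifs
    · norm_num
    · exact hε.le
    · exact le_refl 0
  refine ⟨?_, ?_, ?_, ?_⟩
  · -- (a)
    intro i
    have hsub : (univ : Finset (Fin n)).filter (fun j => 0 < s i j) ⊆
        insert i ((Finset.Icc 1 (k-1)).image
          (fun a => (⟨((i:ℕ)+a) % n, Nat.mod_lt _ hn0⟩ : Fin n))) := by
      intro j hj
      rw [mem_filter] at hj
      rcases eq_or_ne i j with rfl | hne
      · exact mem_insert_self _ _
      · have h2 := hj.2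
        rw [hs, if_neg hne] at h2
        split_ifs at h2 with hP
        · obtain ⟨a, ha1, ha2, ha3⟩ := hP
          refine mem_insert_of_mem (mem_image.mpr ⟨a, mem_Icc.mpr ⟨ha1, ha2⟩, ?_⟩)
          exact Fin.ext ha3.symm
        · exact absurd h2 (lt_irrefl 0)
    calc ((univ : Finset (Fin n)).filter (fun j => 0 < s i j)).card
        ≤ _ := card_le_card hsub
      _ ≤ ((Finset.Icc 1 (k-1)).image
            (fun a => (⟨((i:ℕ)+a) % n, Nat.mod_lt _ hn0⟩ : Fin n))).card + 1 :=
          card_insert_le _ _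
      _ ≤ (Finset.Icc 1 (k-1)).card + 1 := by
          exact Nat.add_le_add_right (card_image_le) 1
      _ ≤ k := by rw [Nat.card_Icc]; omega
  · -- (b)
    intro j
    constructor
    · -- LP constraint
      have hcard : ((univ.erase j).filter
          (fun i : Fin n => ∃ a : ℕ, 1 ≤ a ∧ a ≤ k - 1 ∧ (j : ℕ) = ((i : ℕ) + a) % n)).card
          ≤ k - 1 := by
        have h := Finset.card_le_card_of_injOn
          (s := (univ.erase j).filter
            (fun i : Fin n => ∃ a : ℕ, 1 ≤ a ∧ a ≤ k - 1 ∧ (j : ℕ) = ((i : ℕ) + a) % n))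
          (t := Finset.Icc 1 (k-1))
          (fun i : Fin n => if h : ∃ a : ℕ, 1 ≤ a ∧ a ≤ k - 1 ∧ (j : ℕ) = ((i : ℕ) + a) % n
            then h.choose else 0) ?_ ?_
        · rw [Nat.card_Icc] at h; omega
        · intro i hi
          rw [mem_coe, mem_filter] at hi
          beta_reduce
          rw [dif_pos hi.2]
          have := hi.2.choose_spec
          exact mem_Icc.mpr ⟨this.1, this.2.1⟩
        · intro i₁ h₁ i₂ h₂ heq
          rw [mem_coe, mem_filter] at h₁ h₂
          beta_reduce at heq
          rw [dif_pos h₁.2, dif_pos h₂.2] at heq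
          have sp1 := h₁.2.choose_spec
          have sp2 := h₂.2.choose_spec
          have hmod : ((i₁:ℕ) + h₁.2.choose) % n = ((i₂:ℕ) + h₁.2.choose) % n := by
            rw [← sp1.2.2, heq, ← sp2.2.2]
          have : (i₁:ℕ) % n = (i₂:ℕ) % n :=
            Nat.ModEq.add_right_cancel' _ hmod
          exact Fin.ext (by rwa [Nat.mod_eq_of_lt i₁.isLt, Nat.mod_eq_of_lt i₂.isLt] at this)
      have hsum : ∑ i, s i j ≤ 1 + ((k:ℝ) - 1) * ε := by
        rw [← Finset.sum_erase_add _ _ (mem_univ j)]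
        have hjj : s j j = 1 := by rw [hs]; simp
        rw [hjj]
        have h1 : ∑ i ∈ univ.erase j, s i j =
            ∑ i ∈ (univ.erase j).filter
              (fun i : Fin n => ∃ a : ℕ, 1 ≤ a ∧ a ≤ k - 1 ∧ (j : ℕ) = ((i : ℕ) + a) % n),
              ε := by
          rw [Finset.sum_filter]
          apply Finset.sum_congr rfl
          intro i hi
          rw [hs, if_neg (ne_of_mem_erase hi)]
        rw [h1, Finset.sum_const, nsmul_eq_mul]
        have hc : (((univ.erase j).filter
            (fun i : Fin n => ∃ a : ℕ, 1 ≤ a ∧ a ≤ k - 1 ∧ (j : ℕ) = ((i : ℕ) + a) % n)).card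
            : ℝ) ≤ (k:ℝ) - 1 := by
          have := hcard
          have h2 : ((k - 1 : ℕ) : ℝ) = (k:ℝ) - 1 := by
            rw [Nat.cast_sub hk]; norm_num
          calc _ ≤ ((k - 1 : ℕ) : ℝ) := by exact_mod_cast hcard
            _ = (k:ℝ) - 1 := h2
        have := mul_le_mul_of_nonneg_right hc hε.le
        linarith
      have hxc : ∀ i, s i j * x i = s i j * (1 - (k:ℝ) * ε) := fun i => by rw [hx]
      calc ∑ i, s i j * x i = (∑ i, s i j) * (1 - (k:ℝ) * ε) := by
            rw [Finset.sum_mul]; exact Finset.sum_congr rfl (fun i _ => hxc i)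
        _ ≤ (1 + ((k:ℝ) - 1) * ε) * (1 - (k:ℝ) * ε) := by
            apply mul_le_mul_of_nonneg_right hsum; linarith
        _ ≤ 1 := by nlinarith [mul_nonneg (mul_nonneg (sub_nonneg.mpr hk1) hk0.le) (sq_nonneg ε)]
    · -- big items
      have hbig : (univ : Finset (Fin n)).filter (fun i => 1/2 < s i j) = {j} := by
        ext i
        simp only [mem_filter, mem_univ, true_and, mem_singleton]
        constructor
        · intro h
          by_contra hne
          rw [hs, if_neg hne] at h
          split_ifs at h with hP
          · obtain ⟨a, ha1, ha2, _⟩ := hP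
            have hk2 : 2 ≤ k := by omega
            have : (1:ℝ)/k ≤ 1/2 := by
              apply one_div_le_one_div_of_le
              · norm_num
              · exact_mod_cast hk2
            linarith
          · linarith
        · rintro rfl
          rw [hs, if_pos rfl]; norm_num
      rw [hbig, Finset.sum_singleton, hx]
      nlinarith
  · -- value
    have hnc : (n:ℝ) = 2 * (k:ℝ) - 1 := by
      rw [hn, Nat.cast_sub (by omega : 1 ≤ 2 * k), Nat.cast_mul]
      norm_num
    rw [Finset.sum_congr rfl (fun i _ => hx i), Finset.sum_const, card_univ,
      Fintype.card_fin, nsmul_eq_mul, hnc]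
    ring
  · -- (c)
    intro S' hS'
    by_contra h
    push_neg at h
    obtain ⟨p, hp, q, hq, hpq⟩ := Finset.one_lt_card.mp h
    have key : ∀ p q : Fin n, p ∈ S' → q ∈ S' → (p:ℕ) < (q:ℕ) → False := by
      intro p q hp hq hlt
      have hne : p ≠ q := fun h => by rw [h] at hlt; exact lt_irrefl _ hlt
      have hqn := q.isLt
      have hpn := p.isLt
      have pairle : ∀ j : Fin n, s p j + s q j ≤ ∑ i ∈ S', s i j := by
        intro j
        have hsub : ({p, q} : Finset (Fin n)) ⊆ S' := by
          intro z hz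
          rw [mem_insert, mem_singleton] at hz
          rcases hz with rfl | rfl <;> assumption
        calc s p j + s q j = ∑ i ∈ ({p, q} : Finset (Fin n)), s i j :=
              (Finset.sum_pair (f := fun i => s i j) hne).symm
          _ ≤ ∑ i ∈ S', s i j :=
              Finset.sum_le_sum_of_subset_of_nonneg hsub (fun i _ _ => hs0 i j)
      set d := (q:ℕ) - (p:ℕ) with hd
      by_cases hdk : d ≤ k - 1
      · -- j = q
        have hspq : s p q = ε := by
          rw [hs, if_neg hne, if_pos ?_]
          refine ⟨d, by omega, hdk, ?_⟩
          have : (p:ℕ) + d = (q:ℕ) := by omega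
          rw [this, Nat.mod_eq_of_lt hqn]
        have hsqq : s q q = 1 := by rw [hs]; simp
        have := pairle q
        rw [hspq, hsqq] at this
        have := hS' q
        linarith
      · -- j = p
        have hne' : q ≠ p := fun h => hne h.symm
        have hsqp : s q p = ε := by
          rw [hs, if_neg hne', if_pos ?_]
          refine ⟨n - d, by omega, by omega, ?_⟩
          have h1 : (q:ℕ) + (n - d) = (p:ℕ) + n := by omega
          rw [h1, Nat.add_mod_right, Nat.mod_eq_of_lt hpn]
        have hspp : s p p = 1 := by rw [hs]; simp
        have := pairle p
        rw [hspp, hsqp] at this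
        have := hS' p
        linarith
    have hvne : (p:ℕ) ≠ (q:ℕ) := fun h => hpq (Fin.ext h)
    rcases Nat.lt_or_ge (p:ℕ) (q:ℕ) with hlt | hge
    · exact key p q hp hq hlt
    · exact key q p hq hp (by omega)
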